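/- Let p ≥ 5 be a prime, and let m ≥ 0 and 0 ≤ r < p be integers. Then C(2pm+2r, pm+r) ≡ C(2m,m) * (C(2r,r) + 2m*C(p+2r,r) - 2m*C(2r,r)) (mod p^2). -/

import Mathlib

open Polynomial Finset

lemma exG (p : ℕ) (hp : p.Prime) : ∃ G : ℤ[X],
    (1 + X)^p = 1 + X^p + C (p:ℤ) * G ∧ ∀ i, p ≤ i → G.coeff i = 0 := by
  have hdvd : C (p:ℤ) ∣ ((1+X)^p - 1 - X^p) := by
    rw [C_dvd_iff_dvd_coeff]
    intro i
    simp only [coeff_sub, coeff_one_add_X_pow, coeff_one, coeff_X_pow]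
    rcases eq_or_ne i 0 with h0 | h0
    · simp [h0, hp.pos.ne, hp.pos.ne']
    rcases lt_trichotomy i p with hlt | heq | hgt
    · have : (p:ℤ) ∣ (p.choose i : ℤ) := Int.natCast_dvd_natCast.2 (hp.dvd_choose_self h0 hlt)
      simpa [h0, Nat.ne_of_lt hlt] using this
    · simp [heq, hp.ne_zero, Nat.choose_self]
    · simp [h0, Nat.ne_of_gt hgt, Nat.choose_eq_zero_of_lt hgt]
  obtain ⟨G, hG⟩ := hdvd
  refine ⟨G, by linear_combination (norm := ring_nf) hG, ?_⟩
  intro i hi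
  have h2 : ((1+X:ℤ[X])^p - 1 - X^p).coeff i = 0 := by
    simp only [coeff_sub, coeff_one_add_X_pow, coeff_one, coeff_X_pow]
    rcases eq_or_ne i p with he | hne
    · simp [he, hp.pos.ne', hp.ne_zero]
    · have hlt : p < i := lt_of_le_of_ne hi (Ne.symm hne)
      have hp0 := hp.pos
      have hi0 : ¬ i = 0 := by omega
      simp [Nat.choose_eq_zero_of_lt hlt, hne, hi0]
  rw [hG] at h2
  have : (p:ℤ) * G.coeff i = 0 := by simpa using h2
  exact (mul_eq_zero.1 this).resolve_left (by exact_mod_cast hp.ne_zero)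

lemma coeff_key {R : Type*} [CommRing R] (p : ℕ) (hp : 0 < p) (r n : ℕ) (hr : r < p) (m' : ℕ)
    (F : R[X]) (hF : ∀ i, p ≤ i → F.coeff i = 0) :
    (F * (1+X)^(2*r) * (1+X^p)^n).coeff (p*(m'+1)+r)
      = (F * (1+X)^(2*r)).coeff r * (n.choose (m'+1) : R)
        + (F * (1+X)^(2*r)).coeff (p+r) * (n.choose m' : R) := by
  set B := F * (1+X)^(2*r) with hBdef
  have hB : ∀ i, 2*p + r ≤ i → B.coeff i = 0 := by
    intro i hi
    rw [hBdef, coeff_mul]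
    apply Finset.sum_eq_zero
    rintro ⟨a,b⟩ hab
    rw [Finset.HasAntidiagonal.mem_antidiagonal] at hab
    rcases le_or_gt p a with h | h
    · rw [hF a h, zero_mul]
    · have hb : 2*r < b := by omega
      rw [coeff_one_add_X_pow, Nat.choose_eq_zero_of_lt hb, Nat.cast_zero, mul_zero]
  have hexp : ((1:R[X])+X^p)^n = expand R p ((1+X)^n) := by
    rw [map_pow, map_add, map_one, expand_X]
  rw [hexp, coeff_mul]
  rw [Finset.Nat.sum_antidiagonal_eq_sum_range_succ
    (fun i j => B.coeff i * (expand R p ((1+X)^n)).coeff j)]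
  have hsub : ({r, p+r} : Finset ℕ) ⊆ Finset.range (p*(m'+1)+r+1) := by
    intro x hx
    simp only [Finset.mem_insert, Finset.mem_singleton] at hx
    have h1 : p ≤ p*(m'+1) := Nat.le_mul_of_pos_right p (by omega)
    rcases hx with rfl | rfl <;> simp [Finset.mem_range] <;> omega
  rw [← Finset.sum_subset hsub]
  · rw [Finset.sum_pair (by omega : r ≠ p + r)]
    have e1 : p*(m'+1)+r - r = p*(m'+1) := by omega
    have e2 : p*(m'+1)+r - (p+r) = p*m' := by ring_nf; omega
    rw [e1, e2, coeff_expand hp, coeff_expand hp, if_pos (Dvd.intro _ rfl),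
      if_pos (Dvd.intro _ rfl), Nat.mul_div_cancel_left _ hp, Nat.mul_div_cancel_left _ hp,
      coeff_one_add_X_pow, coeff_one_add_X_pow]
  · intro k hk hknot
    simp only [Finset.mem_insert, Finset.mem_singleton, not_or] at hknot
    obtain ⟨hkr, hkpr⟩ := hknot
    rw [Finset.mem_range] at hk
    rw [coeff_expand hp]
    by_cases hdj : p ∣ (p*(m'+1)+r - k)
    · obtain ⟨t, ht⟩ := hdj
      have hN : p*(m'+1) = p*m' + p := by ring
      have hkt : k + p * t = p*m' + p + r := by omega
      have htle : t ≤ m' + 1 := by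
        by_contra hcon
        have h1 : p * (m'+2) ≤ p * t := Nat.mul_le_mul_left p (by omega)
        have h2 : p*(m'+2) = p*m' + 2*p := by ring
        omega
      have htm : t ≠ m' + 1 := by
        rintro rfl
        have : p*(m'+1) = p*m' + p := by ring
        omega
      have htm' : t ≠ m' := by
        rintro rfl
        omega
      have hbig : 2*p + r ≤ k := by
        have h2 : p * (t+2) ≤ p * (m'+1) := Nat.mul_le_mul_left p (by omega)
        have h3 : p*(t+2) = p*t + 2*p := by ring
        omega
      rw [hB k hbig, zero_mul]
    · rw [if_neg hdj, mul_zero]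

lemma binom2 {R : Type*} [CommRing R] (a b : R) (n : ℕ) :
    ∃ e : R, (a+b)^(n+1) = a^(n+1) + (n+1 : ℕ) • (b*a^n) + b^2*e := by
  induction n with
  | zero => exact ⟨0, by simp⟩
  | succ n ih =>
    obtain ⟨e, he⟩ := ih
    refine ⟨e*a + (n+1 : ℕ) • a^n + b*e, ?_⟩
    rw [pow_succ (a+b), he]
    simp only [nsmul_eq_mul]
    push_cast
    ring

theorem stmt_10 (p : ℕ) (hp : p.Prime) (hp5 : 5 ≤ p) (m r : ℕ) (hr : r < p) :
    (((2 * p * m + 2 * r).choose (p * m + r) : ℤ))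
      ≡ ((2 * m).choose m : ℤ)
        * (((2 * r).choose r : ℤ) + 2 * m * ((p + 2 * r).choose r : ℤ)
            - 2 * m * ((2 * r).choose r : ℤ)) [ZMOD ((p : ℤ) ^ 2)] := by
  rcases Nat.eq_zero_or_pos m with rfl | hm
  · simp
  obtain ⟨m', rfl⟩ : ∃ m', m = m'+1 := ⟨m-1, by omega⟩
  obtain ⟨G, hG, hGc⟩ := exG p hp
  have hp0 : 0 < p := hp.pos
  set A : ℤ[X] := 1 + X^p with hA
  set N : ℕ := p*(m'+1)+r with hN
  -- the polynomial identity
  obtain ⟨E, hE⟩ := binom2 A (C (p:ℤ) * G) (2*m'+1)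
  have hpoly : ((1+X:ℤ[X]))^(2*p*(m'+1)+2*r) = (A + C (p:ℤ)*G)^(2*m'+1+1) * (1+X)^(2*r) := by
    rw [← hG, ← pow_mul, ← pow_add]
    congr 1
    ring
  -- coefficient extraction
  set u : ℤ := (G * (1+X)^(2*r)).coeff r with hu
  set v : ℤ := (G * (1+X)^(2*r)).coeff (p+r) with hv
  set c : ℤ := (G * (1+X)^(2*r) * A^(2*m'+1)).coeff N with hc
  -- Fact A : (p+2r choose r) = (2r choose r) + p*u
  have factA : ((p+2*r).choose r : ℤ) = ((2*r).choose r : ℤ) + p * u := by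
    have h1 : ((1+X:ℤ[X])^(p+2*r)).coeff r = ((1+X:ℤ[X])^p * (1+X)^(2*r)).coeff r := by
      rw [← pow_add]
    rw [coeff_one_add_X_pow, hG] at h1
    have h2 : ((1:ℤ[X]) + X^p + C (p:ℤ) * G) * (1+X)^(2*r)
        = (1+X)^(2*r) + (1+X)^(2*r) * X^p + C (p:ℤ) * (G * (1+X)^(2*r)) := by ring
    rw [h2, coeff_add, coeff_add, coeff_one_add_X_pow, coeff_mul_X_pow', coeff_C_mul] at h1
    rw [if_neg (by omega)] at h1
    simpa using h1
  -- Fact B : (p+2r choose r) = (2r choose r) + p*v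
  have factB : ((p+2*r).choose r : ℤ) = ((2*r).choose r : ℤ) + p * v := by
    have hsymm : (p+2*r).choose (p+r) = (p+2*r).choose r := by
      rw [← Nat.choose_symm (by omega : p+r ≤ p+2*r)]
      congr 1
      omega
    have h1 : ((1+X:ℤ[X])^(p+2*r)).coeff (p+r) = ((1+X:ℤ[X])^p * (1+X)^(2*r)).coeff (p+r) := by
      rw [← pow_add]
    rw [coeff_one_add_X_pow, hsymm, hG] at h1
    have h2 : ((1:ℤ[X]) + X^p + C (p:ℤ) * G) * (1+X)^(2*r)
        = (1+X)^(2*r) + (1+X)^(2*r) * X^p + C (p:ℤ) * (G * (1+X)^(2*r)) := by ring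
    rw [h2, coeff_add, coeff_add, coeff_one_add_X_pow, coeff_mul_X_pow', coeff_C_mul] at h1
    rw [if_pos (by omega : p ≤ p + r)] at h1
    have h3 : p + r - p = r := by omega
    rw [h3, coeff_one_add_X_pow, Nat.choose_eq_zero_of_lt (by omega : 2*r < p+r)] at h1
    push_cast at h1
    linarith
  -- Fact C : c ≡ u * C(2m'+1, m'+1) + v * C(2m'+1, m')  (mod p)
  have factC : (p:ℤ) ∣ c - (u * ((2*m'+1).choose (m'+1) : ℤ) + v * ((2*m'+1).choose m' : ℤ)) := by
    rw [← ZMod.intCast_zmod_eq_zero_iff_dvd]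
    push_cast
    rw [sub_eq_zero]
    have hmapG : (G * (1+X)^(2*r) * A^(2*m'+1)).map (Int.castRingHom (ZMod p))
        = (G.map (Int.castRingHom (ZMod p))) * (1+X)^(2*r) * (1+X^p)^(2*m'+1) := by
      simp [Polynomial.map_mul, Polynomial.map_pow, Polynomial.map_add, hA]
    have hmapB : (G * (1+X)^(2*r)).map (Int.castRingHom (ZMod p))
        = (G.map (Int.castRingHom (ZMod p))) * (1+X)^(2*r) := by
      simp [Polynomial.map_mul, Polynomial.map_pow, Polynomial.map_add]
    have hmap : ((c : ℤ) : ZMod p)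
        = ((G.map (Int.castRingHom (ZMod p))) * (1+X)^(2*r) * (1+X^p)^(2*m'+1)).coeff N := by
      rw [← hmapG, Polynomial.coeff_map, hc]
      simp
    rw [hmap, coeff_key p hp0 r (2*m'+1) hr m' _ (fun i hi => by
      simp [Polynomial.coeff_map, hGc i hi])]
    have hu' : ((G.map (Int.castRingHom (ZMod p))) * (1+X)^(2*r)).coeff r = ((u : ℤ) : ZMod p) := by
      rw [← hmapB, Polynomial.coeff_map, hu]
      simp
    have hv' : ((G.map (Int.castRingHom (ZMod p))) * (1+X)^(2*r)).coeff (p+r)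
        = ((v : ℤ) : ZMod p) := by
      rw [← hmapB, Polynomial.coeff_map, hv]
      simp
    rw [hu', hv']
  obtain ⟨d, hd⟩ := factC
  -- main coefficient identity
  have key : ((2*p*(m'+1)+2*r).choose N : ℤ)
      = ((2*r).choose r : ℤ) * ((2*m'+2).choose (m'+1) : ℤ)
        + ((2*m'+2 : ℕ) : ℤ) * ((p:ℤ) * c)
        + (p:ℤ)^2 * ((G^2 * E * (1+X)^(2*r)).coeff N) := by
    have h0 : ((1+X:ℤ[X])^(2*p*(m'+1)+2*r)).coeff N = ((2*p*(m'+1)+2*r).choose N : ℤ) :=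
      coeff_one_add_X_pow ℤ _ _
    rw [hpoly, hE] at h0
    have hsplit : (A^(2*m'+1+1) + (2*m'+1+1 : ℕ) • (C (p:ℤ) * G * A^(2*m'+1))
          + (C (p:ℤ) * G)^2 * E) * (1+X)^(2*r)
        = (1 * (1+X)^(2*r) * (1+X^p)^(2*m'+2))
          + (2*m'+2 : ℕ) • (C (p:ℤ) * (G * (1+X)^(2*r) * A^(2*m'+1)))
          + C ((p:ℤ)^2) * (G^2 * E * (1+X)^(2*r)) := by
      simp only [nsmul_eq_mul, map_pow]
      push_cast
      rw [hA]
      try ring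
    rw [hsplit, coeff_add, coeff_add, coeff_smul, coeff_C_mul, coeff_C_mul] at h0
    rw [coeff_key p hp0 r (2*m'+2) hr m' 1 (fun i hi => by
      rw [coeff_one]
      rw [if_neg (by omega)])] at h0
    rw [one_mul, coeff_one_add_X_pow, coeff_one_add_X_pow,
      Nat.choose_eq_zero_of_lt (by omega : 2*r < p+r)] at h0
    rw [← h0, ← hc]
    push_cast
    ring
  -- Pascal
  have pascal : ((2*m'+2).choose (m'+1) : ℤ)
      = ((2*m'+1).choose m' : ℤ) + ((2*m'+1).choose (m'+1) : ℤ) := by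
    have : (2*m'+2).choose (m'+1) = (2*m'+1).choose m' + (2*m'+1).choose (m'+1) :=
      Nat.choose_succ_succ _ _
    exact_mod_cast this
  -- assemble
  have goal_eq : ((2*(m'+1)).choose (m'+1) : ℤ)
        * (((2*r).choose r : ℤ) + 2*((m'+1 : ℕ) : ℤ) * ((p+2*r).choose r : ℤ)
            - 2*((m'+1 : ℕ) : ℤ) * ((2*r).choose r : ℤ))
      - ((2*p*(m'+1)+2*r).choose N : ℤ)
      = (p:ℤ)^2 * (-(((2*m'+2 : ℕ) : ℤ)) * d - (G^2 * E * (1+X)^(2*r)).coeff N) := by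
    have hpc : (p:ℤ) * c = ((p+2*r).choose r - (2*r).choose r : ℤ)
          * (((2*m'+1).choose (m'+1) : ℤ) + ((2*m'+1).choose m' : ℤ)) + (p:ℤ)^2 * d := by
      linear_combination (p:ℤ) * hd - ((2*m'+1).choose (m'+1) : ℤ) * factA
        - ((2*m'+1).choose m' : ℤ) * factB
    rw [show 2*(m'+1) = 2*m'+2 from by ring, key, hpc, pascal]
    push_cast
    ring
  exact Int.modEq_iff_dvd.mpr ⟨_, goal_eq⟩
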